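/- Let X be a nonnegative completely subscalable random variable with survival function F̄(x) = P(X > x). Then F̄ is continuous on (0, ∞). -/

import Mathlib

open MeasureTheory

/-- the survival function of a nonnegative completely subscalable
random variable is continuous on `(0, ∞)`. -/
theorem completelySubscalable_survival_continuous
    {Ω : Type*} [MeasurableSpace Ω] (P : Measure Ω) [IsProbabilityMeasure P]
    (X : Ω → ℝ) (hXmeas : Measurable X) (hXpos : ∀ ω, 0 ≤ X ω)
    (hsub : ∀ θ : ℝ, θ ∈ Set.Ioo (0 : ℝ) 1 → ∀ x : ℝ, 0 ≤ x →
      ENNReal.ofReal θ * P {ω | X ω > x} ≤ P {ω | X ω > x / θ}) :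
    ContinuousOn (fun x : ℝ => (P {ω | X ω > x}).toReal) (Set.Ioi 0) := by
  classical
  set μ : Measure ℝ := P.map X with hμ
  haveI : IsProbabilityMeasure μ := Measure.isProbabilityMeasure_map hXmeas.aemeasurable
  have hmap : ∀ x : ℝ, P {ω | X ω > x} = μ (Set.Ioi x) := by
    intro x
    rw [hμ, Measure.map_apply hXmeas measurableSet_Ioi]
    rfl
  -- key: no atoms on (0, ∞)
  have key : ∀ x : ℝ, 0 < x → μ {x} = 0 := by
    intro x hx
    have hIci_le : μ (Set.Ici x) ≤ μ (Set.Ioi x) := by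
      have hstep : ∀ θ : ℝ, θ ∈ Set.Ioo (0 : ℝ) 1 →
          ENNReal.ofReal θ * μ (Set.Ici x) ≤ μ (Set.Ioi x) := by
        intro θ hθ
        have hθx : θ * x < x := by nlinarith [hθ.1, hθ.2]
        have hsubset : Set.Ici x ⊆ Set.Ioi (θ * x) := fun y hy =>
          lt_of_lt_of_le hθx hy
        have h1 : μ (Set.Ici x) ≤ μ (Set.Ioi (θ * x)) := measure_mono hsubset
        have h2 := hsub θ hθ (θ * x) (mul_nonneg hθ.1.le hx.le)
        rw [mul_div_cancel_left₀ x (ne_of_gt hθ.1)] at h2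
        rw [hmap, hmap] at h2
        calc ENNReal.ofReal θ * μ (Set.Ici x)
            ≤ ENNReal.ofReal θ * μ (Set.Ioi (θ * x)) := by gcongr
          _ ≤ μ (Set.Ioi x) := h2
      -- pass to reals and take the limit θ → 1⁻
      have ha : μ (Set.Ici x) ≠ ⊤ := measure_ne_top _ _
      have hb : μ (Set.Ioi x) ≠ ⊤ := measure_ne_top _ _
      rw [← ENNReal.toReal_le_toReal ha hb]
      set a := (μ (Set.Ici x)).toReal
      set b := (μ (Set.Ioi x)).toReal
      have hstep' : ∀ θ : ℝ, θ ∈ Set.Ioo (0 : ℝ) 1 → θ * a ≤ b := by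
        intro θ hθ
        have := hstep θ hθ
        have h := (ENNReal.toReal_le_toReal (by
          exact ENNReal.mul_ne_top ENNReal.ofReal_ne_top ha) hb).mpr this
        rwa [ENNReal.toReal_mul, ENNReal.toReal_ofReal hθ.1.le] at h
      have htend : Filter.Tendsto (fun θ : ℝ => θ * a) (nhdsWithin 1 (Set.Ioo 0 1)) (nhds a) := by
        have : Filter.Tendsto (fun θ : ℝ => θ * a) (nhds 1) (nhds a) := by
          simpa using (continuous_mul_right a).tendsto (1 : ℝ)
        exact this.mono_left nhdsWithin_le_nhds
      haveI : (nhdsWithin (1 : ℝ) (Set.Ioo 0 1)).NeBot := by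
        apply mem_closure_iff_nhdsWithin_neBot.mp
        rw [closure_Ioo (by norm_num : (0:ℝ) ≠ 1)]
        exact Set.right_mem_Icc.mpr (by norm_num)
      exact le_of_tendsto htend (Filter.eventually_of_mem self_mem_nhdsWithin
        fun θ hθ => hstep' θ hθ)
    have hsplit : μ {x} + μ (Set.Ioi x) = μ (Set.Ici x) := by
      rw [← measure_union (by simp) measurableSet_Ioi]
      congr 1
      rw [Set.singleton_union, Set.Ioi_insert]
    have : μ {x} + μ (Set.Ioi x) ≤ 0 + μ (Set.Ioi x) := by
      rw [zero_add, hsplit]; exact hIci_le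
    exact le_antisymm ((ENNReal.add_le_add_iff_right (measure_ne_top _ _)).mp this)
      zero_le
  -- continuity of the cdf on (0, ∞)
  have hcdf_cont : ∀ x : ℝ, 0 < x → ContinuousAt (ProbabilityTheory.cdf μ) x := by
    intro x hx
    rw [(ProbabilityTheory.monotone_cdf μ).continuousAt_iff_leftLim_eq_rightLim,
      (ProbabilityTheory.cdf μ).rightLim_eq]
    have h1 : (ProbabilityTheory.cdf μ).measure {x} = 0 := by
      rw [ProbabilityTheory.measure_cdf]; exact key x hx
    rw [StieltjesFunction.measure_singleton] at h1
    have h2 := (ProbabilityTheory.monotone_cdf μ).leftLim_le (le_refl x)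
    have h3 := ENNReal.ofReal_eq_zero.mp h1
    linarith
  -- rewrite survival function via the cdf
  have heq : (fun x : ℝ => (P {ω | X ω > x}).toReal)
      = fun x : ℝ => 1 - ProbabilityTheory.cdf μ x := by
    funext x
    rw [hmap, ProbabilityTheory.cdf_eq_real, measureReal_def, ← Set.compl_Iic,
      measure_compl measurableSet_Iic (measure_ne_top _ _), measure_univ,
      ENNReal.toReal_sub_of_le prob_le_one ENNReal.one_ne_top, ENNReal.toReal_one]
  rw [heq]
  intro x hx
  exact (continuousAt_const.sub (hcdf_cont x hx)).continuousWithinAt
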